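/- Let H be a Hopf algebra over a field k, A ⊆ H a right coideal subalgebra, C = H/HA⁺ with projection π, and X an object of ᴴ𝓜ᶜ. Then the map ∇_X : C ⊗ X → C ⊗ (C ⊗ X), π(h) ⊗ x ↦ π(h) ⊗ x₍₋₁₎ ⊗ x₍₀₎ − π(h₍₁₎) ⊗ π(h₍₂₎) ⊗ x, is a well-defined morphism in the category ᴴ𝓜ᶜ. -/

import Mathlib

open TensorProduct

noncomputable section

universe v

section Coideal

variable {k : Type*} [Field k] {H : Type*} [Ring H] [HopfAlgebra k H]

/-- `A` is a right coideal subalgebra of `H`: `Δ(A) ⊆ A ⊗ H`. -/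
def IsRightCoidealSubalgebra (A : Subalgebra k H) : Prop :=
  ∀ a ∈ A, Coalgebra.comul (R := k) a ∈
    LinearMap.range (TensorProduct.map (Subalgebra.toSubmodule A).subtype
      (LinearMap.id (R := k) (M := H)))

/-- `A` is a left coideal subalgebra of `H`: `Δ(A) ⊆ H ⊗ A`. -/
def IsLeftCoidealSubalgebra (A : Subalgebra k H) : Prop :=
  ∀ a ∈ A, Coalgebra.comul (R := k) a ∈
    LinearMap.range (TensorProduct.map (LinearMap.id (R := k) (M := H))
      (Subalgebra.toSubmodule A).subtype)

end Coideal

section Hopf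

variable {k : Type*} [Field k] {H : Type*} [Ring H] [HopfAlgebra k H]

/-- The action of `H` on a module, as a `k`-bilinear map. -/
def sAct (Y : Type*) [AddCommGroup Y] [Module k Y] [Module H Y] [IsScalarTower k H Y] :
    H →ₗ[k] Module.End k Y :=
  LinearMap.mk₂ k (fun h y => h • y)
    (fun h h' y => add_smul h h' y)
    (fun c h y => smul_assoc c h y)
    (fun h y y' => smul_add h y y')
    (fun c h y => show h • c • y = c • h • y by
      rw [← algebraMap_smul H c y, smul_smul, ← Algebra.commutes, ← smul_smul, algebraMap_smul])

variable (A : Subalgebra k H)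

/-- The augmentation ideal `A⁺ = Ker ε ∩ A` of a (coideal) subalgebra `A ⊆ H`. -/
def aPlus : Set H := {a : H | a ∈ A ∧ Coalgebra.counit (R := k) a = 0}

/-- The left ideal `HA⁺` of `H` generated by `A⁺`. -/
def Iide : Submodule H H := Submodule.span H (aPlus A)

/-- The quotient `C = H / HA⁺`, a left `H`-module. -/
abbrev Cq := H ⧸ Iide A

/-- The canonical projection `π : H → C = H/HA⁺`. -/
def piC : H →ₗ[k] Cq A := LinearMap.restrictScalars k (Iide A).mkQ

/-- The diagonal action of `H` on a tensor product, through given actions on the two factors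
and the comultiplication of `H`: `h • (y ⊗ z) = Σ h₍₁₎ • y ⊗ h₍₂₎ • z`. -/
def hAct2 {Y Z : Type*} [AddCommGroup Y] [Module k Y] [AddCommGroup Z] [Module k Z]
    (sY : H →ₗ[k] Module.End k Y) (sZ : H →ₗ[k] Module.End k Z) :
    H →ₗ[k] Module.End k (Y ⊗[k] Z) :=
  (TensorProduct.homTensorHomMap (RingHom.id k) Y Z Y Z) ∘ₗ (TensorProduct.map sY sZ) ∘ₗ
    (Coalgebra.comul (R := k))

/-- The coaction of `C` on `C ⊗ Y` given by the comultiplication of `C` on the first factor. -/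
def coactC (Y : Type*) [AddCommGroup Y] [Module k Y]
    (Δc : Cq A →ₗ[k] Cq A ⊗[k] Cq A) :
    Cq A ⊗[k] Y →ₗ[k] Cq A ⊗[k] (Cq A ⊗[k] Y) :=
  (TensorProduct.assoc k (Cq A) (Cq A) Y).toLinearMap ∘ₗ LinearMap.rTensor Y Δc

/-- An object of the category `ᴴ𝓜ᶜ`: a left `H`-module `X` together with a left `C`-comodule
structure `coact : X → C ⊗ X` (coassociative and counital), which is left `H`-linear in the
sense that `(h • x)₍₋₁₎ ⊗ (h • x)₍₀₎ = h₍₁₎ • x₍₋₁₎ ⊗ h₍₂₎ • x₍₀₎`. -/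
structure HMCObj (Δc : Cq A →ₗ[k] Cq A ⊗[k] Cq A) (εc : Cq A →ₗ[k] k)
    (X : Type v) [AddCommGroup X] [Module k X] [Module H X] [IsScalarTower k H X] where
  /-- the coaction `x ↦ x₍₋₁₎ ⊗ x₍₀₎` -/
  coact : X →ₗ[k] Cq A ⊗[k] X
  counit_law : ∀ x : X,
    (TensorProduct.lid k X) ((LinearMap.rTensor X εc) (coact x)) = x
  coassoc : ∀ x : X,
    (TensorProduct.assoc k (Cq A) (Cq A) X) ((LinearMap.rTensor X Δc) (coact x)) =
      (LinearMap.lTensor (Cq A) coact) (coact x)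
  hlinear : ∀ (h : H) (x : X),
    coact (h • x) = hAct2 (sAct (Cq A)) (sAct X) h (coact x)

variable {A}

/-- The map `δ_X : X → C ⊗ X`, `x ↦ x₍₋₁₎ ⊗ x₍₀₎ - π(1) ⊗ x`. -/
def deltaX {X : Type*} [AddCommGroup X] [Module k X] (α : X →ₗ[k] Cq A ⊗[k] X) :
    X →ₗ[k] Cq A ⊗[k] X :=
  α - (TensorProduct.mk k (Cq A) X) (piC A 1)

/-- The coinvariants `ᶜᵒᶜX = {x | x₍₋₁₎ ⊗ x₍₀₎ = π(1) ⊗ x}`, as a `k`-submodule of `X`. -/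
def coinv {X : Type*} [AddCommGroup X] [Module k X] (α : X →ₗ[k] Cq A ⊗[k] X) :
    Submodule k X :=
  LinearMap.ker (deltaX α)

variable (A)

/-- The relations defining `H ⊗_A M` inside `H ⊗[k] M`, for a module `M` with a given
`A`-action `ρ`. -/
def genRel (M : Type*) [AddCommGroup M] [Module k M] (ρ : A → M → M) :
    Submodule k (H ⊗[k] M) :=
  Submodule.span k
    {t : H ⊗[k] M | ∃ (h : H) (a : A) (m : M), t = (h * (a : H)) ⊗ₜ[k] m - h ⊗ₜ[k] ρ a m}

/-- The relations defining `H ⊗_A S` inside `H ⊗[k] S` for a submodule `S ⊆ Y` stable under an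
`A`-action `σ` on `Y`. -/
def genRelS {Y : Type*} [AddCommGroup Y] [Module k Y] (S : Submodule k Y) (σ : A → Y → Y) :
    Submodule k (H ⊗[k] S) :=
  Submodule.span k
    {t : H ⊗[k] S | ∃ (h : H) (a : A) (y : S) (hy : σ a (y : Y) ∈ S),
      t = (h * (a : H)) ⊗ₜ[k] y - h ⊗ₜ[k] (⟨σ a (y : Y), hy⟩ : S)}

/-- The tensor product `H ⊗_A M`, presented as the quotient of `H ⊗[k] M` by relations
`R'`. -/
abbrev TensQ {M : Type*} [AddCommGroup M] [Module k M] (R' : Submodule k (H ⊗[k] M)) :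
    Type _ := (H ⊗[k] M) ⧸ R'

/-- Left multiplication by `b` on the first factor of `H ⊗[k] M`. -/
def mulLeftT (M : Type*) [AddCommGroup M] [Module k M] (b : H) :
    H ⊗[k] M →ₗ[k] H ⊗[k] M :=
  LinearMap.rTensor M (LinearMap.mulLeft k b)

lemma genRel_mulLeftT_le (M : Type*) [AddCommGroup M] [Module k M] (ρ : A → M → M) (b : H) :
    Submodule.map (mulLeftT M b) (genRel A M ρ) ≤ genRel A M ρ := by
  rw [genRel, Submodule.map_span, Submodule.span_le]
  rintro _ ⟨_, ⟨h, a, m, rfl⟩, rfl⟩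
  refine Submodule.subset_span ⟨b * h, a, m, ?_⟩
  simp [mulLeftT, mul_assoc]

lemma genRelS_mulLeftT_le {Y : Type*} [AddCommGroup Y] [Module k Y] (S : Submodule k Y)
    (σ : A → Y → Y) (b : H) :
    Submodule.map (mulLeftT (↥S) b) (genRelS A S σ) ≤ genRelS A S σ := by
  rw [genRelS, Submodule.map_span, Submodule.span_le]
  rintro _ ⟨_, ⟨h, a, y, hy, rfl⟩, rfl⟩
  refine Submodule.subset_span ⟨b * h, a, y, hy, ?_⟩
  simp [mulLeftT, mul_assoc]

/-- The left `H`-module structure on a quotient `(H ⊗[k] M) ⧸ R'`, when the relations `R'` are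
stable under left multiplication on the first factor: this is the `H`-action by left
multiplication on `H ⊗_A M`. -/
def hMulQ {M : Type*} [AddCommGroup M] [Module k M] (R' : Submodule k (H ⊗[k] M))
    (hR' : ∀ b : H, Submodule.map (mulLeftT M b) R' ≤ R') :
    H →ₗ[k] Module.End k ((H ⊗[k] M) ⧸ R') where
  toFun b := Submodule.mapQ R' R' (mulLeftT M b)
    (fun x hx => hR' b ⟨x, hx, rfl⟩)
  map_add' b b' := by
    apply Submodule.linearMap_qext
    apply TensorProduct.ext'
    intro h m
    simp [mulLeftT, add_mul, TensorProduct.add_tmul]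
  map_smul' c b := by
    apply Submodule.linearMap_qext
    apply TensorProduct.ext'
    intro h m
    simp only [mulLeftT, LinearMap.coe_comp, Function.comp_apply, Submodule.mkQ_apply,
      Submodule.mapQ_apply, LinearMap.rTensor_tmul, LinearMap.mulLeft_apply, RingHom.id_apply,
      LinearMap.smul_apply, smul_mul_assoc]
    rw [← TensorProduct.smul_tmul', Submodule.Quotient.mk_smul]

/-- The coaction `h ⊗ m ↦ π(h₍₁₎) ⊗ (h₍₂₎ ⊗ m)` on `H ⊗[k] M`, with values in
`C ⊗ ((H ⊗[k] M) ⧸ R')`. -/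
def indC0 {M : Type*} [AddCommGroup M] [Module k M] (R' : Submodule k (H ⊗[k] M)) :
    H ⊗[k] M →ₗ[k] Cq A ⊗[k] ((H ⊗[k] M) ⧸ R') :=
  (TensorProduct.map (piC A) R'.mkQ) ∘ₗ (TensorProduct.assoc k H H M).toLinearMap ∘ₗ
    (LinearMap.rTensor M (Coalgebra.comul (R := k)))

/-- The canonical map `H ⊗ X → C ⊗ X`, `h ⊗ x ↦ π(h₍₁₎) ⊗ h₍₂₎ • x`. -/
def kappa0 (X : Type*) [AddCommGroup X] [Module k X] [Module H X] [IsScalarTower k H X] :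
    H ⊗[k] X →ₗ[k] Cq A ⊗[k] X :=
  (TensorProduct.map (piC A) (TensorProduct.lift (sAct X))) ∘ₗ
    (TensorProduct.assoc k H H X).toLinearMap ∘ₗ
    (LinearMap.rTensor X (Coalgebra.comul (R := k)))

/-- The map `H ⊗ X → H ⊗ X`, `h ⊗ x ↦ h₍₁₎ ⊗ S(h₍₂₎) • x`. -/
def theta (X : Type*) [AddCommGroup X] [Module k X] [Module H X] [IsScalarTower k H X] :
    H ⊗[k] X →ₗ[k] H ⊗[k] X :=
  (LinearMap.lTensor H
      ((TensorProduct.lift (sAct X)) ∘ₗ (LinearMap.rTensor X (HopfAlgebra.antipode (R := k))))) ∘ₗ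
    (TensorProduct.assoc k H H X).toLinearMap ∘ₗ
    (LinearMap.rTensor X (Coalgebra.comul (R := k)))

/-- The map `∇_X : C ⊗ X → C ⊗ (C ⊗ X)`,
`π(h) ⊗ x ↦ π(h) ⊗ x₍₋₁₎ ⊗ x₍₀₎ - π(h₍₁₎) ⊗ π(h₍₂₎) ⊗ x`. -/
def nablaX (Δc : Cq A →ₗ[k] Cq A ⊗[k] Cq A) {X : Type*} [AddCommGroup X] [Module k X]
    (α : X →ₗ[k] Cq A ⊗[k] X) : Cq A ⊗[k] X →ₗ[k] Cq A ⊗[k] (Cq A ⊗[k] X) :=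
  LinearMap.lTensor (Cq A) α - coactC A X Δc

end Hopf


set_option maxHeartbeats 1000000

section MyAux

variable {k : Type*} [Field k]

private lemma myAssocNat {M N P M' N' P' : Type*}
    [AddCommGroup M] [Module k M] [AddCommGroup N] [Module k N]
    [AddCommGroup P] [Module k P] [AddCommGroup M'] [Module k M']
    [AddCommGroup N'] [Module k N'] [AddCommGroup P'] [Module k P']
    (f : M →ₗ[k] M') (g : N →ₗ[k] N') (h : P →ₗ[k] P') :
    (TensorProduct.assoc k M' N' P').toLinearMap ∘ₗ
        TensorProduct.map (TensorProduct.map f g) h =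
      TensorProduct.map f (TensorProduct.map g h) ∘ₗ
        (TensorProduct.assoc k M N P).toLinearMap := by
  apply TensorProduct.ext_threefold
  intro x y z
  simp

variable {H : Type*} [Ring H] [HopfAlgebra k H]

private lemma myHAct2Natural {M N M' N' : Type*}
    [AddCommGroup M] [Module k M] [AddCommGroup N] [Module k N]
    [AddCommGroup M'] [Module k M'] [AddCommGroup N'] [Module k N']
    (σM : H →ₗ[k] Module.End k M) (σN : H →ₗ[k] Module.End k N)
    (σM' : H →ₗ[k] Module.End k M') (σN' : H →ₗ[k] Module.End k N')
    (f : M →ₗ[k] M') (g : N →ₗ[k] N')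
    (hf : ∀ h : H, f ∘ₗ σM h = σM' h ∘ₗ f) (hg : ∀ h : H, g ∘ₗ σN h = σN' h ∘ₗ g)
    (h : H) :
    TensorProduct.map f g ∘ₗ hAct2 σM σN h = hAct2 σM' σN' h ∘ₗ TensorProduct.map f g := by
  have key : ∀ u : H ⊗[k] H,
      TensorProduct.map f g ∘ₗ TensorProduct.homTensorHomMap (RingHom.id k) M N M N
          (TensorProduct.map σM σN u) =
        TensorProduct.homTensorHomMap (RingHom.id k) M' N' M' N' (TensorProduct.map σM' σN' u) ∘ₗ
          TensorProduct.map f g := by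
    intro u
    induction u using TensorProduct.induction_on with
    | zero => simp
    | tmul a b =>
        rw [TensorProduct.map_tmul, TensorProduct.map_tmul,
          TensorProduct.homTensorHomMap_apply, TensorProduct.homTensorHomMap_apply,
          ← TensorProduct.map_comp, ← TensorProduct.map_comp, hf a, hg b]
    | add u v hu hv =>
        simp only [map_add, LinearMap.add_comp, LinearMap.comp_add, hu, hv]
  simpa only [hAct2, LinearMap.comp_apply] using key (Coalgebra.comul h)

set_option synthInstance.maxHeartbeats 1000000 in
private lemma myHAct2Assoc {M N P : Type*}
    [AddCommGroup M] [Module k M] [AddCommGroup N] [Module k N] [AddCommGroup P] [Module k P]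
    (σM : H →ₗ[k] Module.End k M) (σN : H →ₗ[k] Module.End k N)
    (σP : H →ₗ[k] Module.End k P) (h : H) :
    (TensorProduct.assoc k M N P).toLinearMap ∘ₗ hAct2 (hAct2 σM σN) σP h =
      hAct2 σM (hAct2 σN σP) h ∘ₗ (TensorProduct.assoc k M N P).toLinearMap := by
  have key : ∀ w : (H ⊗[k] H) ⊗[k] H,
      (TensorProduct.assoc k M N P).toLinearMap ∘ₗ
          TensorProduct.homTensorHomMap (RingHom.id k) (M ⊗[k] N) P (M ⊗[k] N) P
            (TensorProduct.map
              (TensorProduct.homTensorHomMap (RingHom.id k) M N M N ∘ₗ TensorProduct.map σM σN) σP w) =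
        TensorProduct.homTensorHomMap (RingHom.id k) M (N ⊗[k] P) M (N ⊗[k] P)
            (TensorProduct.map σM
              (TensorProduct.homTensorHomMap (RingHom.id k) N P N P ∘ₗ TensorProduct.map σN σP)
              (TensorProduct.assoc k H H H w)) ∘ₗ
          (TensorProduct.assoc k M N P).toLinearMap := by
    intro w
    induction w using TensorProduct.induction_on with
    | zero => simp
    | tmul uv c =>
        induction uv using TensorProduct.induction_on with
        | zero => simp
        | tmul a b =>
            simp only [TensorProduct.map_tmul, TensorProduct.assoc_tmul,
              LinearMap.comp_apply, TensorProduct.homTensorHomMap_apply]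
            exact myAssocNat (σM a) (σN b) (σP c)
        | add u v hu hv =>
            simp only [TensorProduct.add_tmul, map_add, LinearMap.add_comp,
              LinearMap.comp_add, hu, hv]
    | add u v hu hv =>
        simp only [map_add, LinearMap.add_comp, LinearMap.comp_add, hu, hv]
  have comp_eq₁ : TensorProduct.map (hAct2 σM σN) σP =
      TensorProduct.map
          (TensorProduct.homTensorHomMap (RingHom.id k) M N M N ∘ₗ TensorProduct.map σM σN) σP ∘ₗ
        LinearMap.rTensor H (Coalgebra.comul (R := k)) := by
    apply TensorProduct.ext'
    intro a b
    rfl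
  have comp_eq₂ : TensorProduct.map σM (hAct2 σN σP) =
      TensorProduct.map σM
          (TensorProduct.homTensorHomMap (RingHom.id k) N P N P ∘ₗ TensorProduct.map σN σP) ∘ₗ
        LinearMap.lTensor H (Coalgebra.comul (R := k)) := by
    apply TensorProduct.ext'
    intro a b
    rfl
  show (TensorProduct.assoc k M N P).toLinearMap ∘ₗ
      TensorProduct.homTensorHomMap (RingHom.id k) (M ⊗[k] N) P (M ⊗[k] N) P
        (TensorProduct.map (hAct2 σM σN) σP (Coalgebra.comul h)) =
    TensorProduct.homTensorHomMap (RingHom.id k) M (N ⊗[k] P) M (N ⊗[k] P)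
        (TensorProduct.map σM (hAct2 σN σP) (Coalgebra.comul h)) ∘ₗ
      (TensorProduct.assoc k M N P).toLinearMap
  rw [comp_eq₁, comp_eq₂, LinearMap.comp_apply, LinearMap.comp_apply, key,
    Coalgebra.coassoc_apply]

end MyAux

/-- For an object `X` of `ᴴ𝓜ᶜ`, the map `∇_X : C ⊗ X → C ⊗ (C ⊗ X)`,
`π(h) ⊗ x ↦ π(h) ⊗ x₍₋₁₎ ⊗ x₍₀₎ - π(h₍₁₎) ⊗ π(h₍₂₎) ⊗ x`, is a well-defined morphism in
`ᴴ𝓜ᶜ`: it satisfies the stated formula, is `H`-linear, and is `C`-colinear. -/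
theorem nablaX_isMorphism
    {k : Type*} [Field k] {H : Type*} [Ring H] [HopfAlgebra k H]
    (A : Subalgebra k H) (hA : IsRightCoidealSubalgebra A)
    (Δc : Cq A →ₗ[k] Cq A ⊗[k] Cq A) (εc : Cq A →ₗ[k] k)
    (hΔc : ∀ h : H, Δc (piC A h) =
      TensorProduct.map (piC A) (piC A) (Coalgebra.comul (R := k) h))
    (hεc : ∀ h : H, εc (piC A h) = Coalgebra.counit (R := k) h)
    (X : Type v) [AddCommGroup X] [Module k X] [Module H X] [IsScalarTower k H X]
    (o : HMCObj A Δc εc X) :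
    (∀ (h : H) (x : X), nablaX A Δc o.coact (piC A h ⊗ₜ[k] x) =
      piC A h ⊗ₜ[k] o.coact x -
        (TensorProduct.assoc k (Cq A) (Cq A) X) (Δc (piC A h) ⊗ₜ[k] x)) ∧
    (∀ (h : H) (t : Cq A ⊗[k] X),
      nablaX A Δc o.coact (hAct2 (sAct (Cq A)) (sAct X) h t) =
        hAct2 (sAct (Cq A)) (hAct2 (sAct (Cq A)) (sAct X)) h (nablaX A Δc o.coact t)) ∧
    (∀ t : Cq A ⊗[k] X,
      coactC A (Cq A ⊗[k] X) Δc (nablaX A Δc o.coact t) =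
        LinearMap.lTensor (Cq A) (nablaX A Δc o.coact) (coactC A X Δc t)) := by
  -- basic pointwise facts
  have hπ : ∀ (a c : H), piC A (a * c) = a • piC A c := by
    intro a c
    show (Iide A).mkQ (a * c) = a • (Iide A).mkQ c
    rw [← smul_eq_mul, map_smul]
  -- multiplicativity of `π ⊗ π` against the diagonal action
  have hmul : ∀ u v : H ⊗[k] H,
      TensorProduct.map (piC A) (piC A) (u * v) =
        TensorProduct.homTensorHomMap (RingHom.id k) (Cq A) (Cq A) (Cq A) (Cq A)
          (TensorProduct.map (sAct (Cq A)) (sAct (Cq A)) u)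
          (TensorProduct.map (piC A) (piC A) v) := by
    intro u v
    induction u using TensorProduct.induction_on with
    | zero => simp
    | tmul a b =>
        induction v using TensorProduct.induction_on with
        | zero => simp
        | tmul c d =>
            simp only [Algebra.TensorProduct.tmul_mul_tmul, TensorProduct.map_tmul,
              TensorProduct.homTensorHomMap_apply, hπ]
            rfl
        | add v w hv hw =>
            simp only [mul_add, map_add, hv, hw]
    | add u u' hu hu' =>
        simp only [add_mul, map_add, LinearMap.add_apply, hu, hu']
  -- `Δc` is `H`-linear
  have hΔlin : ∀ h : H, Δc ∘ₗ sAct (Cq A) h =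
      hAct2 (sAct (Cq A)) (sAct (Cq A)) h ∘ₗ Δc := by
    intro h
    apply LinearMap.ext
    intro c
    obtain ⟨g, rfl⟩ := (Iide A).mkQ_surjective c
    have hg : ((Iide A).mkQ g : Cq A) = piC A g := rfl
    have hsm : sAct (k := k) (Cq A) h (piC A g) = piC A (h * g) := (hπ h g).symm
    simp only [LinearMap.comp_apply, hg, hsm]
    rw [hΔc, hΔc, Bialgebra.comul_mul, hmul]
    rfl
  -- `α = o.coact` is `H`-linear
  have hαlin : ∀ h : H, o.coact ∘ₗ sAct (k := k) X h =
      hAct2 (sAct (Cq A)) (sAct X) h ∘ₗ o.coact := by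
    intro h
    apply LinearMap.ext
    intro x
    exact o.hlinear h x
  have hidlinC : ∀ h : H, (LinearMap.id : Cq A →ₗ[k] Cq A) ∘ₗ sAct (Cq A) h =
      sAct (Cq A) h ∘ₗ LinearMap.id := by
    intro h; simp
  have hidlinX : ∀ h : H, (LinearMap.id : X →ₗ[k] X) ∘ₗ sAct (k := k) X h =
      sAct (k := k) X h ∘ₗ LinearMap.id := by
    intro h; simp
  refine ⟨?_, ?_, ?_⟩
  · -- Part 1: the formula
    intro h x
    simp [nablaX, coactC]
  · -- Part 2: H-linearity
    have part2 : ∀ h : H,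
        nablaX A Δc o.coact ∘ₗ hAct2 (sAct (Cq A)) (sAct X) h =
          hAct2 (sAct (Cq A)) (hAct2 (sAct (Cq A)) (sAct X)) h ∘ₗ nablaX A Δc o.coact := by
      intro h
      have E1 := myHAct2Natural (sAct (k := k) (Cq A)) (sAct (k := k) X) (sAct (k := k) (Cq A))
        (hAct2 (sAct (k := k) (Cq A)) (sAct (k := k) X)) LinearMap.id o.coact hidlinC hαlin h
      have E2 := myHAct2Natural (sAct (k := k) (Cq A)) (sAct (k := k) X)
        (hAct2 (sAct (k := k) (Cq A)) (sAct (k := k) (Cq A))) (sAct (k := k) X) Δc LinearMap.id hΔlin hidlinX h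
      have E3 := myHAct2Assoc (sAct (k := k) (Cq A)) (sAct (k := k) (Cq A)) (sAct (k := k) X) h
      have hnab : nablaX A Δc o.coact =
          TensorProduct.map LinearMap.id o.coact -
            (TensorProduct.assoc k (Cq A) (Cq A) X).toLinearMap ∘ₗ
              TensorProduct.map Δc LinearMap.id := rfl
      rw [hnab, LinearMap.sub_comp, LinearMap.comp_sub, E1, LinearMap.comp_assoc, E2,
        ← LinearMap.comp_assoc, E3, LinearMap.comp_assoc]
    intro h t
    exact LinearMap.congr_fun (part2 h) t
  · -- Part 3: C-colinearity
    -- coassociativity of Δc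
    have hr : ∀ u : H ⊗[k] H,
        LinearMap.rTensor (Cq A) Δc (TensorProduct.map (piC A) (piC A) u) =
          TensorProduct.map (TensorProduct.map (piC A) (piC A)) (piC A)
            (LinearMap.rTensor H (Coalgebra.comul (R := k)) u) := by
      intro u
      induction u using TensorProduct.induction_on with
      | zero => simp
      | tmul a b => simp [hΔc]
      | add u v hu hv => simp [hu, hv]
    have hl : ∀ u : H ⊗[k] H,
        LinearMap.lTensor (Cq A) Δc (TensorProduct.map (piC A) (piC A) u) =
          TensorProduct.map (piC A) (TensorProduct.map (piC A) (piC A))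
            (LinearMap.lTensor H (Coalgebra.comul (R := k)) u) := by
      intro u
      induction u using TensorProduct.induction_on with
      | zero => simp
      | tmul a b => simp [hΔc]
      | add u v hu hv => simp [hu, hv]
    have coas : ∀ c : Cq A,
        (TensorProduct.assoc k (Cq A) (Cq A) (Cq A))
            (LinearMap.rTensor (Cq A) Δc (Δc c)) =
          LinearMap.lTensor (Cq A) Δc (Δc c) := by
      intro c
      obtain ⟨g, rfl⟩ := (Iide A).mkQ_surjective c
      have hg : ((Iide A).mkQ g : Cq A) = piC A g := rfl
      rw [hg, hΔc, hr, hl]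
      have := LinearMap.congr_fun
        (myAssocNat (k := k) (piC A) (piC A) (piC A))
        (LinearMap.rTensor H (Coalgebra.comul (R := k)) (Coalgebra.comul (R := k) g))
      simp only [LinearMap.comp_apply, LinearEquiv.coe_coe] at this
      rw [this, Coalgebra.coassoc_apply]
    intro t
    induction t using TensorProduct.induction_on with
    | zero => simp
    | add t s ht hs => simp only [map_add, ht, hs]
    | tmul c x =>
      have hnbt : nablaX A Δc o.coact (c ⊗ₜ[k] x) =
          c ⊗ₜ[k] o.coact x -
            (TensorProduct.assoc k (Cq A) (Cq A) X) (Δc c ⊗ₜ[k] x) := by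
        simp [nablaX, coactC]
      have hco : coactC A X Δc (c ⊗ₜ[k] x) =
          (TensorProduct.assoc k (Cq A) (Cq A) X) (Δc c ⊗ₜ[k] x) := by
        simp [coactC]
      have hco2 : ∀ (c' : Cq A) (e : Cq A ⊗[k] X),
          coactC A (Cq A ⊗[k] X) Δc (c' ⊗ₜ[k] e) =
            (TensorProduct.assoc k (Cq A) (Cq A) (Cq A ⊗[k] X)) (Δc c' ⊗ₜ[k] e) := by
        intro c' e; simp [coactC]
      -- auxiliary reassociation map
      set F : (Cq A ⊗[k] (Cq A ⊗[k] Cq A)) ⊗[k] X →ₗ[k]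
          Cq A ⊗[k] (Cq A ⊗[k] (Cq A ⊗[k] X)) :=
        LinearMap.lTensor (Cq A) (TensorProduct.assoc k (Cq A) (Cq A) X).toLinearMap ∘ₗ
          (TensorProduct.assoc k (Cq A) (Cq A ⊗[k] Cq A) X).toLinearMap with hF
      have S1 : ∀ d : Cq A ⊗[k] Cq A,
          (TensorProduct.assoc k (Cq A) (Cq A) (Cq A ⊗[k] X)) (d ⊗ₜ[k] o.coact x) =
            LinearMap.lTensor (Cq A) (LinearMap.lTensor (Cq A) o.coact)
              ((TensorProduct.assoc k (Cq A) (Cq A) X) (d ⊗ₜ[k] x)) := by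
        intro d
        induction d using TensorProduct.induction_on with
        | zero => simp
        | tmul a b => simp
        | add d e hd he => simp only [TensorProduct.add_tmul, map_add, hd, he]
      have claimA : ∀ d : Cq A ⊗[k] Cq A,
          coactC A (Cq A ⊗[k] X) Δc
              ((TensorProduct.assoc k (Cq A) (Cq A) X) (d ⊗ₜ[k] x)) =
            F (((TensorProduct.assoc k (Cq A) (Cq A) (Cq A))
                (LinearMap.rTensor (Cq A) Δc d)) ⊗ₜ[k] x) := by
        intro d
        induction d using TensorProduct.induction_on with
        | zero => simp
        | add d e hd he =>
            simp only [TensorProduct.add_tmul, map_add, hd, he]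
        | tmul c₁ c₂ =>
            simp only [TensorProduct.assoc_tmul, LinearMap.rTensor_tmul]
            rw [hco2 c₁ (c₂ ⊗ₜ[k] x)]
            have sub : ∀ e : Cq A ⊗[k] Cq A,
                (TensorProduct.assoc k (Cq A) (Cq A) (Cq A ⊗[k] X))
                    (e ⊗ₜ[k] (c₂ ⊗ₜ[k] x)) =
                  F (((TensorProduct.assoc k (Cq A) (Cq A) (Cq A))
                      (e ⊗ₜ[k] c₂)) ⊗ₜ[k] x) := by
              intro e
              induction e using TensorProduct.induction_on with
              | zero => simp
              | tmul a b => simp [hF]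
              | add e f he hf =>
                  simp only [TensorProduct.add_tmul, map_add, he, hf]
            exact sub (Δc c₁)
      have claimB : ∀ d : Cq A ⊗[k] Cq A,
          LinearMap.lTensor (Cq A) (coactC A X Δc)
              ((TensorProduct.assoc k (Cq A) (Cq A) X) (d ⊗ₜ[k] x)) =
            F ((LinearMap.lTensor (Cq A) Δc d) ⊗ₜ[k] x) := by
        intro d
        induction d using TensorProduct.induction_on with
        | zero => simp
        | add d e hd he =>
            simp only [TensorProduct.add_tmul, map_add, hd, he]
        | tmul c₁ c₂ =>
            simp only [TensorProduct.assoc_tmul, LinearMap.lTensor_tmul, hco]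
            have sub : ∀ e : Cq A ⊗[k] Cq A,
                (c₁ ⊗ₜ[k] ((TensorProduct.assoc k (Cq A) (Cq A) X) (e ⊗ₜ[k] x)) :
                    Cq A ⊗[k] (Cq A ⊗[k] (Cq A ⊗[k] X))) =
                  F ((c₁ ⊗ₜ[k] e) ⊗ₜ[k] x) := by
              intro e
              induction e using TensorProduct.induction_on with
              | zero => simp
              | tmul a b => simp [hF]
              | add e f he hf =>
                  simp only [TensorProduct.add_tmul, TensorProduct.tmul_add, map_add, he, hf]
            exact sub (Δc c₂)
      have hsplit : ∀ e : Cq A ⊗[k] (Cq A ⊗[k] X),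
          LinearMap.lTensor (Cq A) (nablaX A Δc o.coact) e =
            LinearMap.lTensor (Cq A) (LinearMap.lTensor (Cq A) o.coact) e -
              LinearMap.lTensor (Cq A) (coactC A X Δc) e := by
        intro e
        induction e using TensorProduct.induction_on with
        | zero => simp
        | tmul a t =>
            rw [LinearMap.lTensor_tmul, LinearMap.lTensor_tmul, LinearMap.lTensor_tmul,
              show nablaX A Δc o.coact t =
                LinearMap.lTensor (Cq A) o.coact t - coactC A X Δc t from rfl,
              TensorProduct.tmul_sub]
        | add e f he hf =>
            simp only [map_add, he, hf]
            abel
      rw [hnbt, hco, map_sub, hsplit, hco2 c (o.coact x), S1 (Δc c), claimA (Δc c),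
        claimB (Δc c), coas c]

end
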